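/- Let $n \ge 1$, $s \in (0,1/2)$, and let $K : \mathbb{R}^n \times \mathbb{R}^n \to [0, +\infty]$ be a measurable symmetric kernel (i.e. $K(x,y) = K(y,x)$). Let $W : \mathbb{R}^n \times \mathbb{R} \to [0, +\infty)$ be measurable, continuous in the second variable, with $W(x, \pm 1) = 0$ for a.e. $x$, and with $\inf\{W(x,r) : x \in \mathbb{R}^n,\ |r| \le \theta\} > 0$ for every $\theta \in [0,1)$. Fix an open set $\Omega \subseteq \mathbb{R}^n$. Suppose $u_\varepsilon \to u$ in $L^1_{loc}(\mathbb{R}^n)$ with $\|u_\varepsilon\|_{L^\infty} \le 1$, and $\liminf_{\varepsilon \to 0^+} \mathcal{E}_\varepsilon(u_\varepsilon; \Omega) < +\infty$, where $\mathcal{E}_\varepsilon(v; \Omega) := \frac{1}{2}\iint_{\mathcal{C}_\Omega} |v(x)-v(y)|^2 K(x,y)\,dx\,dy + \varepsilon^{-2s}\int_\Omega W(x, v(x))\,dx$. Then $u|_\Omega = \chi_E - \chi_{\Omega \setminus E}$ a.e. for some measurable $E \subseteq \Omega$, and $\frac{1}{2}\iint_{\mathcal{C}_\Omega} |u(x)-u(y)|^2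 K(x,y)\,dx\,dy \le \liminf_{\varepsilon \to 0^+} \mathcal{E}_\varepsilon(u_\varepsilon; \Omega)$. -/

import Mathlib

open MeasureTheory Metric Set Filter
open scoped ENNReal Classical
open scoped Topology

/-- The cross-shaped set `C_Ω = (ℝⁿ × ℝⁿ) \ ((ℝⁿ \ Ω) × (ℝⁿ \ Ω))`. -/
def crossSet {n : ℕ} (Ω : Set (EuclideanSpace ℝ (Fin n))) :
    Set (EuclideanSpace ℝ (Fin n) × EuclideanSpace ℝ (Fin n)) :=
  {p | p.1 ∈ Ω ∨ p.2 ∈ Ω}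

/-- The kinetic (Gagliardo-type) part of the energy. -/
noncomputable def kinEnergy {n : ℕ}
    (K : EuclideanSpace ℝ (Fin n) → EuclideanSpace ℝ (Fin n) → ℝ)
    (v : EuclideanSpace ℝ (Fin n) → ℝ) (Ω : Set (EuclideanSpace ℝ (Fin n))) : ℝ≥0∞ :=
  (1/2 : ℝ≥0∞) * ∫⁻ p in crossSet Ω, ENNReal.ofReal (|v p.1 - v p.2| ^ 2 * K p.1 p.2)

/-- The rescaled Ginzburg–Landau-type energy `E_ε`. -/
noncomputable def glEnergy {n : ℕ} (s : ℝ)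
    (K : EuclideanSpace ℝ (Fin n) → EuclideanSpace ℝ (Fin n) → ℝ)
    (W : EuclideanSpace ℝ (Fin n) → ℝ → ℝ) (ε : ℝ)
    (v : EuclideanSpace ℝ (Fin n) → ℝ) (Ω : Set (EuclideanSpace ℝ (Fin n))) : ℝ≥0∞ :=
  kinEnergy K v Ω +
    ENNReal.ofReal (ε ^ (-(2*s))) * ∫⁻ x in Ω, ENNReal.ofReal (W x (v x))

/-- the Γ-liminf inequality for `E_ε` as `ε → 0⁺`, `s ∈ (0,1/2)`. -/
theorem statement_7 (n : ℕ) (hn : 1 ≤ n) (s : ℝ) (hs : s ∈ Set.Ioo (0 : ℝ) (1/2))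
    (K : EuclideanSpace ℝ (Fin n) → EuclideanSpace ℝ (Fin n) → ℝ)
    (hKmeas : Measurable (Function.uncurry K))
    (hKnonneg : ∀ x y, 0 ≤ K x y) (hKsym : ∀ x y, K x y = K y x)
    (W : EuclideanSpace ℝ (Fin n) → ℝ → ℝ)
    (hWmeas : Measurable (Function.uncurry W))
    (hWnonneg : ∀ x r, 0 ≤ W x r) (hWcont : ∀ x, Continuous (W x))
    (hWzero : ∀ᵐ x : EuclideanSpace ℝ (Fin n), W x 1 = 0 ∧ W x (-1) = 0)
    (hWpos : ∀ θ ∈ Set.Ico (0 : ℝ) 1, ∃ γ > 0, ∀ x r, |r| ≤ θ → γ ≤ W x r)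
    (Ω : Set (EuclideanSpace ℝ (Fin n))) (hΩ : IsOpen Ω)
    (uε : ℝ → EuclideanSpace ℝ (Fin n) → ℝ) (huεmeas : ∀ ε, Measurable (uε ε))
    (huεbd : ∀ ε x, |uε ε x| ≤ 1)
    (u : EuclideanSpace ℝ (Fin n) → ℝ) (humeas : Measurable u) (hubd : ∀ x, |u x| ≤ 1)
    (hconv : ∀ R : ℝ, Tendsto (fun ε => ∫ x in ball (0 : EuclideanSpace ℝ (Fin n)) R,
        |uε ε x - u x|) (nhdsWithin 0 (Set.Ioi 0)) (nhds 0))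
    (hfin : Filter.liminf (fun ε => glEnergy s K W ε (uε ε) Ω)
        (nhdsWithin 0 (Set.Ioi 0)) < ⊤) :
    ∃ E : Set (EuclideanSpace ℝ (Fin n)), MeasurableSet E ∧ E ⊆ Ω ∧
      (∀ᵐ x ∂(volume.restrict Ω), u x = if x ∈ E then (1 : ℝ) else -1) ∧
      kinEnergy K u Ω ≤
        Filter.liminf (fun ε => glEnergy s K W ε (uε ε) Ω)
          (nhdsWithin 0 (Set.Ioi 0)) := by
  classical
  set F := nhdsWithin (0:ℝ) (Set.Ioi 0) with hFdef
  set f : ℝ → ℝ≥0∞ := fun ε => glEnergy s K W ε (uε ε) Ω with hfdef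
  set L := Filter.liminf f F with hLdef
  have hLtop : L ≠ ⊤ := hfin.ne
  -- select a good sequence
  have hsel : ∀ k : ℕ, ∃ e : ℝ, (e ∈ Set.Ioo (0:ℝ) (1/(k+1))) ∧
      f e ≤ L + ENNReal.ofReal (1/(k+1)) ∧
      (∫ x in ball (0 : EuclideanSpace ℝ (Fin n)) (k+1), |uε e x - u x|) ≤ (1/2)^k := by
    intro k
    have hpos : (0:ℝ) < 1/(k+1) := by positivity
    have h1 : ∃ᶠ e in F, f e < L + ENNReal.ofReal (1/(k+1)) :=
      Filter.frequently_lt_of_liminf_lt (by isBoundedDefault)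
        (ENNReal.lt_add_right hLtop (ENNReal.ofReal_pos.mpr hpos).ne')
    have h2 : ∀ᶠ e in F, (∫ x in ball (0 : EuclideanSpace ℝ (Fin n)) (k+1),
        |uε e x - u x|) < (1/2:ℝ)^k :=
      (hconv (k+1)).eventually_lt_const (by positivity)
    have h3 : ∀ᶠ e in F, e ∈ Set.Ioo (0:ℝ) (1/(k+1)) :=
      Ioo_mem_nhdsGT_of_mem ⟨le_refl 0, hpos⟩
    obtain ⟨e, he1, he2, he3⟩ := (h1.and_eventually (h2.and h3)).exists
    exact ⟨e, he3, he1.le, he2.le⟩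
  choose ek hek1 hek2 hek3 using hsel
  have hek0 : ∀ k, 0 < ek k := fun k => (hek1 k).1
  have hektend : Tendsto ek atTop (𝓝 0) :=
    squeeze_zero (fun k => (hek0 k).le) (fun k => (hek1 k).2.le)
      tendsto_one_div_add_atTop_nhds_zero_nat
  -- integrability of |uε e - u| on balls
  have hint : ∀ (e : ℝ) (R : ℝ), Integrable (fun x => |uε e x - u x|)
      (volume.restrict (ball (0 : EuclideanSpace ℝ (Fin n)) R)) := by
    intro e R
    have hmb : volume (ball (0 : EuclideanSpace ℝ (Fin n)) R) < ⊤ := measure_ball_lt_top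
    refine Integrable.mono' (g := fun _ => (2:ℝ)) (integrableOn_const hmb.ne)
      (((huεmeas e).sub humeas).abs.aestronglyMeasurable) (ae_of_all _ fun x => ?_)
    rw [Real.norm_eq_abs, abs_abs]
    calc |uε e x - u x| ≤ |uε e x| + |u x| := abs_sub _ _
      _ ≤ 2 := by linarith [huεbd e x, hubd x]
  -- a.e. convergence on balls
  have haemeas : ∀ k, Measurable fun x => ENNReal.ofReal |uε (ek k) x - u x| := fun k =>
    ((huεmeas _).sub humeas).abs.ennreal_ofReal
  have hball_ae : ∀ m : ℕ, ∀ᵐ x ∂(volume.restrict (ball (0:EuclideanSpace ℝ (Fin n)) (m+1))),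
      Tendsto (fun k => uε (ek k) x) atTop (𝓝 (u x)) := by
    intro m
    have hsum : (∫⁻ x in ball (0:EuclideanSpace ℝ (Fin n)) (m+1),
        ∑' k, ENNReal.ofReal |uε (ek (k+m)) x - u x|) ≠ ⊤ := by
      rw [lintegral_tsum (fun k => (haemeas (k+m)).aemeasurable)]
      have hterm : ∀ k : ℕ, (∫⁻ x in ball (0:EuclideanSpace ℝ (Fin n)) (m+1),
          ENNReal.ofReal |uε (ek (k+m)) x - u x|) ≤ (ENNReal.ofReal (1/2))^k := by
        intro k
        have hsub : ball (0:EuclideanSpace ℝ (Fin n)) (m+1) ⊆ ball 0 ((k+m:ℕ)+1) :=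
          ball_subset_ball (by push_cast; linarith)
        calc (∫⁻ x in ball (0:EuclideanSpace ℝ (Fin n)) (m+1),
              ENNReal.ofReal |uε (ek (k+m)) x - u x|)
            ≤ ∫⁻ x in ball (0:EuclideanSpace ℝ (Fin n)) ((k+m:ℕ)+1),
              ENNReal.ofReal |uε (ek (k+m)) x - u x| := lintegral_mono_set hsub
          _ = ENNReal.ofReal (∫ x in ball (0:EuclideanSpace ℝ (Fin n)) ((k+m:ℕ)+1),
              |uε (ek (k+m)) x - u x|) :=
              (ofReal_integral_eq_lintegral_ofReal (hint _ _)
                (ae_of_all _ fun x => abs_nonneg _)).symm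
          _ ≤ ENNReal.ofReal ((1/2)^(k+m)) := ENNReal.ofReal_le_ofReal (hek3 _)
          _ ≤ (ENNReal.ofReal (1/2))^k := by
              rw [← ENNReal.ofReal_pow (by norm_num)]
              exact ENNReal.ofReal_le_ofReal
                (pow_le_pow_of_le_one (by norm_num) (by norm_num) (Nat.le_add_right _ _))
      refine ne_top_of_le_ne_top ?_ (ENNReal.tsum_le_tsum hterm)
      have h12 : ENNReal.ofReal (1/2) = 2⁻¹ := by
        rw [one_div, ENNReal.ofReal_inv_of_pos two_pos, ENNReal.ofReal_ofNat]
      rw [h12, ENNReal.tsum_geometric, ENNReal.one_sub_inv_two]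
      simp
    have hmeastsum : Measurable fun x => ∑' k, ENNReal.ofReal |uε (ek (k+m)) x - u x| :=
      Measurable.ennreal_tsum fun k => haemeas (k+m)
    filter_upwards [ae_lt_top hmeastsum hsum] with x hx
    have t1 : Tendsto (fun k => ENNReal.ofReal |uε (ek (k+m)) x - u x|) atTop (𝓝 0) :=
      ENNReal.tendsto_atTop_zero_of_tsum_ne_top hx.ne
    have t2 : Tendsto (fun k => |uε (ek (k+m)) x - u x|) atTop (𝓝 0) := by
      have h := (ENNReal.tendsto_toReal (by simp : (0:ℝ≥0∞) ≠ ⊤)).comp t1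
      have heq : ∀ k : ℕ, ((ENNReal.ofReal |uε (ek (k+m)) x - u x|).toReal)
          = |uε (ek (k+m)) x - u x| := fun k => ENNReal.toReal_ofReal (abs_nonneg _)
      simpa [Function.comp_def, heq] using h
    have t3 : Tendsto (fun k => uε (ek (k+m)) x) atTop (𝓝 (u x)) := by
      rw [tendsto_iff_dist_tendsto_zero]
      simpa [Real.dist_eq] using t2
    exact (tendsto_add_atTop_iff_nat m).mp t3
  -- global a.e. convergence
  have hae : ∀ᵐ x : EuclideanSpace ℝ (Fin n),
      Tendsto (fun k => uε (ek k) x) atTop (𝓝 (u x)) := by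
    rw [ae_iff]
    set S := {x : EuclideanSpace ℝ (Fin n) |
      ¬ Tendsto (fun k => uε (ek k) x) atTop (𝓝 (u x))} with hSdef
    have hm : ∀ m : ℕ, volume (S ∩ ball (0:EuclideanSpace ℝ (Fin n)) (m+1)) = 0 := by
      intro m
      have h := hball_ae m
      rw [ae_iff, Measure.restrict_apply' measurableSet_ball] at h
      exact h
    have hcover : S ⊆ ⋃ m : ℕ, (S ∩ ball (0:EuclideanSpace ℝ (Fin n)) (m+1)) := by
      intro x hx
      obtain ⟨m, hm'⟩ := exists_nat_gt ‖x‖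
      refine mem_iUnion.2 ⟨m, hx, ?_⟩
      rw [mem_ball, dist_zero_right]
      push_cast
      linarith
    exact measure_mono_null hcover (measure_iUnion_null hm)
  -- the potential part vanishes in the limit
  have h2s : (0:ℝ) < 2*s := by nlinarith [hs.1]
  have hWint : Tendsto (fun k => ∫⁻ x in Ω, ENNReal.ofReal (W x (uε (ek k) x)))
      atTop (𝓝 0) := by
    have hbd : ∀ k, (∫⁻ x in Ω, ENNReal.ofReal (W x (uε (ek k) x)))
        ≤ (L + 1) * ENNReal.ofReal ((ek k) ^ (2*s)) := by
      intro k
      have hekp := hek0 k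
      have hb : (0:ℝ) < (ek k) ^ (2*s) := Real.rpow_pos_of_pos hekp _
      have hmul : ENNReal.ofReal ((ek k) ^ (-(2*s)))
          * (∫⁻ x in Ω, ENNReal.ofReal (W x (uε (ek k) x))) ≤ L + 1 := by
        calc ENNReal.ofReal ((ek k) ^ (-(2*s)))
              * (∫⁻ x in Ω, ENNReal.ofReal (W x (uε (ek k) x)))
            ≤ f (ek k) := le_add_self
          _ ≤ L + ENNReal.ofReal (1/(k+1)) := hek2 k
          _ ≤ L + 1 := add_le_add_right (ENNReal.ofReal_le_one.mpr (by
              rw [div_le_one (by positivity)]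
              have : (0:ℝ) ≤ (k:ℝ) := Nat.cast_nonneg k
              linarith)) _
      have hneg : (ek k) ^ (-(2*s)) = ((ek k)^(2*s))⁻¹ := Real.rpow_neg hekp.le _
      have hinv : ENNReal.ofReal ((ek k)^(2*s)) * ENNReal.ofReal ((ek k) ^ (-(2*s))) = 1 := by
        rw [hneg, ← ENNReal.ofReal_mul hb.le, mul_inv_cancel₀ hb.ne', ENNReal.ofReal_one]
      calc (∫⁻ x in Ω, ENNReal.ofReal (W x (uε (ek k) x)))
          = ENNReal.ofReal ((ek k)^(2*s)) * ENNReal.ofReal ((ek k)^(-(2*s)))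
            * (∫⁻ x in Ω, ENNReal.ofReal (W x (uε (ek k) x))) := by rw [hinv, one_mul]
        _ = ENNReal.ofReal ((ek k)^(2*s)) * (ENNReal.ofReal ((ek k)^(-(2*s)))
            * (∫⁻ x in Ω, ENNReal.ofReal (W x (uε (ek k) x)))) := mul_assoc _ _ _
        _ ≤ ENNReal.ofReal ((ek k)^(2*s)) * (L + 1) := mul_le_mul_right hmul _
        _ = (L + 1) * ENNReal.ofReal ((ek k)^(2*s)) := mul_comm _ _
    have ht : Tendsto (fun k => (ek k) ^ (2*s)) atTop (𝓝 0) := by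
      have hc : ContinuousAt (fun x : ℝ => x ^ (2*s)) 0 :=
        Real.continuousAt_rpow_const 0 _ (Or.inr h2s.le)
      have h := hc.tendsto.comp hektend
      rwa [Real.zero_rpow h2s.ne'] at h
    have ht1 : Tendsto (fun k => ENNReal.ofReal ((ek k)^(2*s))) atTop (𝓝 0) := by
      have := (ENNReal.continuous_ofReal.tendsto 0).comp ht
      simpa [Function.comp_def] using this
    have ht2 : Tendsto (fun k => (L+1) * ENNReal.ofReal ((ek k)^(2*s))) atTop (𝓝 0) := by
      have hne : L + 1 ≠ ⊤ := by
        simp [ENNReal.add_eq_top, hLtop]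
      have := ENNReal.Tendsto.const_mul ht1 (Or.inr hne)
      simpa using this
    exact tendsto_of_tendsto_of_tendsto_of_le_of_le tendsto_const_nhds ht2
      (fun k => zero_le) hbd
  -- W (x, u x) = 0 a.e. on Ω
  have hmeask : ∀ k, Measurable fun x => ENNReal.ofReal (W x (uε (ek k) x)) := fun k =>
    (hWmeas.comp (measurable_id.prodMk (huεmeas _))).ennreal_ofReal
  have hmeasu : Measurable fun x => ENNReal.ofReal (W x (u x)) :=
    (hWmeas.comp (measurable_id.prodMk humeas)).ennreal_ofReal
  have hWu : ∀ᵐ x ∂(volume.restrict Ω), W x (u x) = 0 := by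
    have hle : (∫⁻ x in Ω, ENNReal.ofReal (W x (u x))) = 0 := by
      have hfatou := lintegral_liminf_le (u := atTop) (μ := volume.restrict Ω) hmeask
      have haeΩ : ∀ᵐ x ∂(volume.restrict Ω), ENNReal.ofReal (W x (u x))
          = liminf (fun k => ENNReal.ofReal (W x (uε (ek k) x))) atTop := by
        filter_upwards [ae_restrict_of_ae hae] with x hx
        have ht : Tendsto (fun k => ENNReal.ofReal (W x (uε (ek k) x))) atTop
            (𝓝 (ENNReal.ofReal (W x (u x)))) :=
          (ENNReal.continuous_ofReal.tendsto _).comp (((hWcont x).tendsto _).comp hx)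
        exact ht.liminf_eq.symm
      have hch : (∫⁻ x in Ω, ENNReal.ofReal (W x (u x)))
          ≤ liminf (fun k => ∫⁻ x in Ω, ENNReal.ofReal (W x (uε (ek k) x))) atTop := by
        rw [lintegral_congr_ae haeΩ]
        exact hfatou
      rw [hWint.liminf_eq] at hch
      exact le_antisymm hch zero_le
    filter_upwards [(lintegral_eq_zero_iff hmeasu).mp hle] with x hx
    have : ENNReal.ofReal (W x (u x)) = 0 := hx
    exact le_antisymm (ENNReal.ofReal_eq_zero.mp this) (hWnonneg x _)
  -- u = ±1 a.e. on Ω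
  have huone : ∀ᵐ x ∂(volume.restrict Ω), u x = 1 ∨ u x = -1 := by
    filter_upwards [hWu] with x hx
    by_contra hcon
    push_neg at hcon
    have habs : |u x| < 1 := by
      rcases lt_or_eq_of_le (hubd x) with h | h
      · exact h
      · exfalso
        rcases (abs_eq (by norm_num : (0:ℝ) ≤ 1)).mp h with h1 | h1
        · exact hcon.1 h1
        · exact hcon.2 h1
    obtain ⟨γ, hγ, hγle⟩ := hWpos |u x| ⟨abs_nonneg _, habs⟩
    have := hγle x (u x) le_rfl
    rw [hx] at this
    linarith
  refine ⟨Ω ∩ u⁻¹' {1}, hΩ.measurableSet.inter (humeas (measurableSet_singleton 1)),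
    inter_subset_left, ?_, ?_⟩
  · filter_upwards [huone, ae_restrict_mem hΩ.measurableSet] with x hx hxΩ
    rcases hx with h1 | h1
    · rw [if_pos ⟨hxΩ, by simp [h1]⟩]
      exact h1
    · rw [if_neg (by simp [h1]; norm_num)]
      exact h1
  · -- kinetic liminf inequality
    have hKm : Measurable fun p : EuclideanSpace ℝ (Fin n) × EuclideanSpace ℝ (Fin n) =>
        K p.1 p.2 := hKmeas
    set g : (EuclideanSpace ℝ (Fin n) × EuclideanSpace ℝ (Fin n)) → ℝ≥0∞ :=
      fun p => (1/2 : ℝ≥0∞) * ENNReal.ofReal (|u p.1 - u p.2| ^ 2 * K p.1 p.2) with hgdef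
    set G : ℕ → (EuclideanSpace ℝ (Fin n) × EuclideanSpace ℝ (Fin n)) → ℝ≥0∞ :=
      fun k p => (1/2 : ℝ≥0∞) *
        ENNReal.ofReal (|uε (ek k) p.1 - uε (ek k) p.2| ^ 2 * K p.1 p.2) with hGdef
    have hmeasg0 : Measurable fun p : EuclideanSpace ℝ (Fin n) × EuclideanSpace ℝ (Fin n) =>
        ENNReal.ofReal (|u p.1 - u p.2| ^ 2 * K p.1 p.2) :=
      ((((humeas.comp measurable_fst).sub (humeas.comp measurable_snd)).abs.pow_const 2).mul
        hKm).ennreal_ofReal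
    have hmeasG0 : ∀ k, Measurable fun p : EuclideanSpace ℝ (Fin n) × EuclideanSpace ℝ (Fin n) =>
        ENNReal.ofReal (|uε (ek k) p.1 - uε (ek k) p.2| ^ 2 * K p.1 p.2) := fun k =>
      (((((huεmeas _).comp measurable_fst).sub ((huεmeas _).comp measurable_snd)).abs.pow_const
        2).mul hKm).ennreal_ofReal
    have hmeasg : Measurable g := measurable_const.mul hmeasg0
    have hmeasG : ∀ k, Measurable (G k) := fun k => measurable_const.mul (hmeasG0 k)
    have haeprod : ∀ᵐ p ∂((volume : Measure (EuclideanSpace ℝ (Fin n) ×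
        EuclideanSpace ℝ (Fin n))).restrict (crossSet Ω)),
        Tendsto (fun k => G k p) atTop (𝓝 (g p)) := by
      set N := {x : EuclideanSpace ℝ (Fin n) |
        ¬ Tendsto (fun k => uε (ek k) x) atTop (𝓝 (u x))} with hNdef
      have hNnull : volume N = 0 := hae
      set N' := toMeasurable volume N with hN'def
      have hN'null : volume N' = 0 := by rw [measure_toMeasurable]; exact hNnull
      have hbad : volume {p : EuclideanSpace ℝ (Fin n) × EuclideanSpace ℝ (Fin n) |
          p.1 ∈ N' ∨ p.2 ∈ N'} = 0 := by
        have hsub : {p : EuclideanSpace ℝ (Fin n) × EuclideanSpace ℝ (Fin n) |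
            p.1 ∈ N' ∨ p.2 ∈ N'} ⊆ (N' ×ˢ univ) ∪ (univ ×ˢ N') := by
          rintro ⟨a, b⟩ (h | h)
          · exact Or.inl ⟨h, mem_univ _⟩
          · exact Or.inr ⟨mem_univ _, h⟩
        refine measure_mono_null hsub ?_
        refine le_antisymm ((measure_union_le _ _).trans ?_) zero_le
        rw [Measure.volume_eq_prod, Measure.prod_prod, Measure.prod_prod, hN'null]
        simp
      refine ae_restrict_of_ae ?_
      rw [ae_iff]
      refine measure_mono_null ?_ hbad
      intro p hp
      simp only [mem_setOf_eq] at hp ⊢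
      by_contra hcon
      push_neg at hcon
      apply hp
      have h1 : Tendsto (fun k => uε (ek k) p.1) atTop (𝓝 (u p.1)) :=
        not_not.mp (fun h => hcon.1 (subset_toMeasurable _ _ h))
      have h2 : Tendsto (fun k => uε (ek k) p.2) atTop (𝓝 (u p.2)) :=
        not_not.mp (fun h => hcon.2 (subset_toMeasurable _ _ h))
      have ht : Tendsto (fun k => |uε (ek k) p.1 - uε (ek k) p.2| ^ 2 * K p.1 p.2) atTop
          (𝓝 (|u p.1 - u p.2| ^ 2 * K p.1 p.2)) :=
        (((h1.sub h2).abs.pow 2).mul_const _)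
      exact ENNReal.Tendsto.const_mul ((ENNReal.continuous_ofReal.tendsto _).comp ht)
        (Or.inr (by norm_num))
    have hfatou : (∫⁻ p in crossSet Ω, g p) ≤
        liminf (fun k => ∫⁻ p in crossSet Ω, G k p) atTop := by
      have hF := lintegral_liminf_le (u := atTop)
        (μ := (volume : Measure (EuclideanSpace ℝ (Fin n) ×
          EuclideanSpace ℝ (Fin n))).restrict (crossSet Ω)) hmeasG
      refine le_trans (le_of_eq (lintegral_congr_ae ?_)) hF
      filter_upwards [haeprod] with p hp
      exact hp.liminf_eq.symm
    have hkin_k : ∀ k, (∫⁻ p in crossSet Ω, G k p) = kinEnergy K (uε (ek k)) Ω := fun k => by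
      rw [hGdef, kinEnergy]
      exact lintegral_const_mul _ (hmeasG0 k)
    have hkin_u : (∫⁻ p in crossSet Ω, g p) = kinEnergy K u Ω := by
      rw [hgdef, kinEnergy]
      exact lintegral_const_mul _ hmeasg0
    have hlim1 : kinEnergy K u Ω ≤
        liminf (fun k => kinEnergy K (uε (ek k)) Ω) atTop := by
      rw [← hkin_u]
      refine hfatou.trans (le_of_eq ?_)
      congr 1
      funext k
      exact hkin_k k
    have hle1 : ∀ k, kinEnergy K (uε (ek k)) Ω ≤ f (ek k) := fun k => le_self_add
    have hlim2 : liminf (fun k => f (ek k)) atTop ≤ L := by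
      have h1 : liminf (fun k => f (ek k)) atTop
          ≤ liminf (fun k : ℕ => L + ENNReal.ofReal (1/(k+1))) atTop :=
        liminf_le_liminf (Filter.Eventually.of_forall hek2)
      have h2 : Tendsto (fun k : ℕ => L + ENNReal.ofReal (1/((k:ℝ)+1))) atTop (𝓝 L) := by
        have ho : Tendsto (fun k : ℕ => ENNReal.ofReal (1/((k:ℝ)+1))) atTop (𝓝 0) := by
          have := (ENNReal.continuous_ofReal.tendsto 0).comp
            tendsto_one_div_add_atTop_nhds_zero_nat
          simpa [Function.comp_def] using this
        have := Tendsto.const_add L ho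
        simpa using this
      rw [h2.liminf_eq] at h1
      exact h1
    calc kinEnergy K u Ω ≤ liminf (fun k => kinEnergy K (uε (ek k)) Ω) atTop := hlim1
      _ ≤ liminf (fun k => f (ek k)) atTop :=
        liminf_le_liminf (Filter.Eventually.of_forall hle1)
      _ ≤ L := hlim2
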